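/- Let f ∈ ℝ^k be a rational vector with f ∉ ℤ^k, and let π : ℝ^k → ℝ, α ∈ ℝ. Suppose that for every finitely supported y : ℝ^k → ℤ with y ≥ 0 and ∑_r r·y(r) ∈ f + ℤ^k, the equation ∑_r π(r)·y(r) = α holds, and moreover π(r) ≥ 0 for all rational r. Then π is additive (π(r¹ + r²) = π(r¹) + π(r²) for all r¹, r² ∈ ℝ^k), π vanishes on ℚ^k, and α = 0. -/

import Mathlib

theorem stmt2 (k : ℕ) (f : Fin k → ℚ)
    (hf : ¬ ∃ z : Fin k → ℤ, (fun i => (f i : ℝ)) = (fun i => (z i : ℝ)))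
    (π : (Fin k → ℝ) → ℝ) (α : ℝ)
    (himp : ∀ y : (Fin k → ℝ) →₀ ℤ, (∀ r, 0 ≤ y r) →
      (∃ w : Fin k → ℤ,
        ∑ r ∈ y.support, (y r : ℝ) • r = (fun i => (f i : ℝ) + (w i : ℝ))) →
      ∑ r ∈ y.support, π r * (y r : ℝ) = α)
    (hnonneg : ∀ q : Fin k → ℚ, 0 ≤ π (fun i => (q i : ℝ))) :
    (∀ r₁ r₂ : Fin k → ℝ, π (r₁ + r₂) = π r₁ + π r₂) ∧
    (∀ q : Fin k → ℚ, π (fun i => (q i : ℝ)) = 0) ∧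
    α = 0 := by
  classical
  -- common denominator lemma
  have hdenom : ∀ q : Fin k → ℚ, ∃ (n : ℕ) (w : Fin k → ℤ), 0 < n ∧
      ∀ i, (n : ℝ) * (q i : ℝ) = (w i : ℝ) := by
    intro q
    have h1 : ∀ i, ∃ z : ℤ, ((∏ j, (q j).den : ℕ) : ℝ) * (q i : ℝ) = (z : ℝ) := by
      intro i
      obtain ⟨c, hc⟩ := Finset.dvd_prod_of_mem (fun j => (q j).den) (Finset.mem_univ i)
      refine ⟨(c : ℤ) * (q i).num, ?_⟩
      have hq : ((∏ j, (q j).den : ℕ) : ℚ) * q i = (((c : ℤ) * (q i).num : ℤ) : ℚ) := by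
        rw [hc]; push_cast
        rw [mul_comm ((q i).den : ℚ) (c : ℚ), mul_assoc, mul_comm ((q i).den : ℚ) (q i),
          Rat.mul_den_eq_num]
      exact_mod_cast congrArg (Rat.cast : ℚ → ℝ) hq
    choose w hw using h1
    exact ⟨∏ j, (q j).den, w, Finset.prod_pos (fun i _ => (q i).pos), hw⟩
  have hS : ∀ (y : (Fin k → ℝ) →₀ ℤ) (g : (Fin k → ℝ) → ℝ),
      ∑ r ∈ y.support, g r * (y r : ℝ) = y.sum (fun r n => g r * (n : ℝ)) := fun _ _ => rfl
  have hV : ∀ (y : (Fin k → ℝ) →₀ ℤ),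
      ∑ r ∈ y.support, (y r : ℝ) • r = y.sum (fun r n => (n : ℝ) • r) := fun _ => rfl
  set fr : Fin k → ℝ := fun i => (f i : ℝ) with hfr
  -- α = π fr
  have hbase : π fr = α := by
    have := himp (Finsupp.single fr 1) ?_ ?_
    · rw [hS, Finsupp.sum_single_index (by simp)] at this
      simpa using this
    · intro r; simp [Finsupp.single_apply]; split <;> simp
    · obtain ⟨n, w, hn, hw⟩ := hdenom f
      refine ⟨0, ?_⟩
      rw [hV, Finsupp.sum_single_index (by simp)]
      funext i; simp [hfr]
  -- (n+1) π fr = α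
  obtain ⟨n, w, hn, hw⟩ := hdenom f
  have hmult : π fr * ((n : ℝ) + 1) = α := by
    have := himp (Finsupp.single fr ((n : ℤ) + 1)) ?_ ?_
    · rw [hS, Finsupp.sum_single_index (by simp)] at this
      push_cast at this ⊢; linarith [this]
    · intro r; simp [Finsupp.single_apply]; split <;> omega
    · refine ⟨w, ?_⟩
      rw [hV, Finsupp.sum_single_index (by simp)]
      funext i
      have := hw i
      simp only [hfr, Pi.smul_apply, smul_eq_mul]
      push_cast
      linarith [this]
  have hπf : π fr = 0 := by
    have hn' : (0 : ℝ) < (n : ℝ) := by exact_mod_cast hn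
    nlinarith [hbase, hmult]
  have hα : α = 0 := by rw [← hbase, hπf]
  -- evaluation lemma for sums of singles
  have h0 : ∀ (g : (Fin k → ℝ) → ℝ) (a : Fin k → ℝ), g a * ((0 : ℤ) : ℝ) = 0 := by
    intro g a; simp
  have hadd : ∀ (g : (Fin k → ℝ) → ℝ) (a : Fin k → ℝ) (b₁ b₂ : ℤ),
      g a * ((b₁ + b₂ : ℤ) : ℝ) = g a * (b₁ : ℝ) + g a * (b₂ : ℝ) := by
    intro g a b₁ b₂; push_cast; ring
  have h0V : ∀ (a : Fin k → ℝ), ((0 : ℤ) : ℝ) • a = (0 : Fin k → ℝ) := by intro a; simp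
  have haddV : ∀ (a : Fin k → ℝ) (b₁ b₂ : ℤ),
      ((b₁ + b₂ : ℤ) : ℝ) • a = (b₁ : ℝ) • a + (b₂ : ℝ) • a := by
    intro a b₁ b₂; push_cast; rw [add_smul]
  -- π vanishes on rationals
  have hrat : ∀ q : Fin k → ℚ, π (fun i => (q i : ℝ)) = 0 := by
    intro q
    obtain ⟨m, u, hm, hu⟩ := hdenom q
    set qr : Fin k → ℝ := fun i => (q i : ℝ) with hqr
    have := himp (Finsupp.single fr 1 + Finsupp.single qr (m : ℤ)) ?_ ?_
    · rw [hS, Finsupp.sum_add_index' (h0 π) (hadd π),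
        Finsupp.sum_single_index (h0 π fr), Finsupp.sum_single_index (h0 π qr), hα, hπf] at this
      have hm' : (0 : ℝ) < (m : ℝ) := by exact_mod_cast hm
      push_cast at this
      nlinarith [this]
    · intro r
      simp only [Finsupp.add_apply, Finsupp.single_apply]
      split <;> split <;> omega
    · refine ⟨u, ?_⟩
      rw [hV, Finsupp.sum_add_index' h0V haddV,
        Finsupp.sum_single_index (h0V fr), Finsupp.sum_single_index (h0V qr)]
      funext i
      have := hu i
      simp only [hfr, hqr, Pi.add_apply, Pi.smul_apply, smul_eq_mul]
      push_cast
      linarith [this]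
  -- additivity
  have haddpi : ∀ r₁ r₂ : Fin k → ℝ, π (r₁ + r₂) = π r₁ + π r₂ := by
    intro r₁ r₂
    set s : Fin k → ℝ := fr - r₁ - r₂ with hs
    have e1 := himp (Finsupp.single r₁ 1 + Finsupp.single r₂ 1 + Finsupp.single s 1) ?_ ?_
    rotate_left
    · intro r
      simp only [Finsupp.add_apply, Finsupp.single_apply]
      split <;> split <;> split <;> omega
    · refine ⟨0, ?_⟩
      rw [hV, Finsupp.sum_add_index' h0V haddV, Finsupp.sum_add_index' h0V haddV,
        Finsupp.sum_single_index (h0V r₁), Finsupp.sum_single_index (h0V r₂),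
        Finsupp.sum_single_index (h0V s)]
      funext i
      simp [hs, hfr]
    have e2 := himp (Finsupp.single (r₁ + r₂) 1 + Finsupp.single s 1) ?_ ?_
    rotate_left
    · intro r
      simp only [Finsupp.add_apply, Finsupp.single_apply]
      split <;> split <;> omega
    · refine ⟨0, ?_⟩
      rw [hV, Finsupp.sum_add_index' h0V haddV,
        Finsupp.sum_single_index (h0V (r₁ + r₂)), Finsupp.sum_single_index (h0V s)]
      funext i
      simp [hs, hfr]
    rw [hS, Finsupp.sum_add_index' (h0 π) (hadd π), Finsupp.sum_add_index' (h0 π) (hadd π),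
      Finsupp.sum_single_index (h0 π r₁), Finsupp.sum_single_index (h0 π r₂),
      Finsupp.sum_single_index (h0 π s)] at e1
    rw [hS, Finsupp.sum_add_index' (h0 π) (hadd π),
      Finsupp.sum_single_index (h0 π (r₁ + r₂)), Finsupp.sum_single_index (h0 π s)] at e2
    push_cast at e1 e2
    linarith [e1, e2]
  exact ⟨haddpi, hrat, hα⟩
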